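/- Let m0 ≥ 2, m1 > m0, and define q(x) = β(x)/α(x) on (Z_α, ∞), where Z_α is the unique zero of α. Then q is strictly increasing on (Z_α,∞), lim_{x→Z_α^+} q(x) = -∞, and lim_{x→∞} q(x) = m1/(2(m1-1)). -/

import Mathlib

open Filter Set

noncomputable def artanh (x : ℝ) : ℝ := (1/2) * Real.log ((1 + x) / (1 - x))

lemma tanh_formula (x : ℝ) : Real.tanh x = 1 - 2 / (Real.exp (2*x) + 1) := by
  have h : Real.exp (2*x) = Real.exp x * Real.exp x := by
    rw [two_mul, Real.exp_add]
  rw [Real.tanh_eq_sinh_div_cosh, Real.sinh_eq, Real.cosh_eq, Real.exp_neg, h]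
  have h1 := Real.exp_pos x
  have h2 : Real.exp x * Real.exp x + 1 > 0 := by positivity
  field_simp
  ring

lemma tanh_strictMono : StrictMono Real.tanh := by
  intro x y hxy
  rw [tanh_formula, tanh_formula]
  have h1 : Real.exp (2*x) < Real.exp (2*y) := Real.exp_lt_exp.2 (by linarith)
  have h2 : (0:ℝ) < Real.exp (2*x) + 1 := by positivity
  have := div_lt_div_of_pos_left (by norm_num : (0:ℝ) < 2) h2
    (by linarith : Real.exp (2*x) + 1 < Real.exp (2*y) + 1)
  linarith

lemma continuous_tanh : Continuous Real.tanh := by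
  have : Real.tanh = fun x => Real.sinh x / Real.cosh x :=
    funext fun x => Real.tanh_eq_sinh_div_cosh x
  rw [this]
  exact Real.continuous_sinh.div Real.continuous_cosh (fun x => (Real.cosh_pos x).ne')

lemma tanh_tendsto_atTop : Tendsto Real.tanh atTop (nhds 1) := by
  have h : Tendsto (fun x : ℝ => Real.exp (2*x) + 1) atTop atTop :=
    (Real.tendsto_exp_atTop.comp (tendsto_atTop_mono (fun x => le_refl _)
      (tendsto_id.const_mul_atTop (by norm_num : (0:ℝ) < 2)))).atTop_add tendsto_const_nhds
  have h2 : Tendsto (fun x : ℝ => 2 / (Real.exp (2*x) + 1)) atTop (nhds 0) :=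
    tendsto_const_nhds.div_atTop h
  have := (tendsto_const_nhds (x := (1:ℝ)) (f := atTop)).sub h2
  simpa using this.congr (fun x => (tanh_formula x).symm)

lemma tanh_artanh {y : ℝ} (h1 : -1 < y) (h2 : y < 1) : Real.tanh (artanh y) = y := by
  have hy1 : (0:ℝ) < 1 + y := by linarith
  have hy2 : (0:ℝ) < 1 - y := by linarith
  have hexp : Real.exp (2 * artanh y) = (1 + y) / (1 - y) := by
    rw [artanh]
    rw [show 2 * (1/2 * Real.log ((1 + y) / (1 - y))) = Real.log ((1 + y) / (1 - y)) by ring]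
    exact Real.exp_log (by positivity)
  rw [tanh_formula, hexp]
  have hne : (1 + y) / (1 - y) + 1 = 2 / (1 - y) := by field_simp; ring
  rw [hne]
  field_simp; ring

lemma key_div_lt (A B t s : ℝ) (hB : 0 < B) (ht : 0 < A*t+B) (hs : 0 < A*s+B) (hts : t < s) :
    (1/4)*((A+2)*t+B) / ((1/2)*(A*t+B)) < (1/4)*((A+2)*s+B) / ((1/2)*(A*s+B)) := by
  rw [div_lt_div_iff₀ (by linarith) (by linarith)]
  nlinarith [mul_pos hB (sub_pos.2 hts)]

lemma quotient_aux (a b : ℝ) (ha : 2 ≤ a) (hab : a < b) (α β q : ℝ → ℝ)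
    (hα : ∀ x, α x = (1/2) * ((a + b - 2) * Real.tanh x + b - a))
    (hβ : ∀ x, β x = (1/4) * ((a + b) * Real.tanh x + b - a))
    (hq : ∀ x, q x = β x / α x) :
    StrictMonoOn q (Set.Ioi (artanh ((a - b) / (a + b - 2)))) ∧
      Tendsto q (nhdsWithin (artanh ((a - b) / (a + b - 2)))
        (Set.Ioi (artanh ((a - b) / (a + b - 2))))) atBot ∧
      Tendsto q atTop (nhds (b / (2 * (b - 1)))) := by
  have hA : (0:ℝ) < a + b - 2 := by linarith
  have hB : (0:ℝ) < b - a := by linarith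
  have hval1 : -1 < (a - b) / (a + b - 2) := by
    rw [lt_div_iff₀ hA]; linarith
  have hval2 : (a - b) / (a + b - 2) < 1 := by
    rw [div_lt_iff₀ hA]; linarith
  have htZ : Real.tanh (artanh ((a - b) / (a + b - 2))) = (a - b) / (a + b - 2) :=
    tanh_artanh hval1 hval2
  have htZval : (a + b - 2) * Real.tanh (artanh ((a - b) / (a + b - 2))) + (b - a) = 0 := by
    rw [htZ]; field_simp; ring
  have hpos : ∀ x ∈ Set.Ioi (artanh ((a - b) / (a + b - 2))),
      0 < (a + b - 2) * Real.tanh x + (b - a) := by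
    intro x hx
    have h := tanh_strictMono (Set.mem_Ioi.mp hx)
    nlinarith
  have e1 : ∀ x, β x = (1/4) * (((a + b - 2) + 2) * Real.tanh x + (b - a)) := by
    intro x; rw [hβ]; ring
  have e2 : ∀ x, α x = (1/2) * ((a + b - 2) * Real.tanh x + (b - a)) := by
    intro x; rw [hα]; ring
  have hαpos : ∀ x ∈ Set.Ioi (artanh ((a - b) / (a + b - 2))), 0 < α x := by
    intro x hx
    rw [e2]
    have := hpos x hx
    linarith
  refine ⟨?_, ?_, ?_⟩
  · intro x hx y hy hxy
    rw [hq, hq, e1, e1, e2, e2]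
    exact key_div_lt _ _ _ _ hB (hpos x hx) (hpos y hy) (tanh_strictMono hxy)
  · have hcontα : Continuous α := by
      rw [funext e2]
      exact (continuous_const.mul ((continuous_const.mul continuous_tanh).add
        continuous_const)).congr (fun x => rfl)
    have hcontβ : Continuous β := by
      rw [funext e1]
      exact (continuous_const.mul ((continuous_const.mul continuous_tanh).add
        continuous_const)).congr (fun x => rfl)
    have hαZ : α (artanh ((a - b) / (a + b - 2))) = 0 := by
      rw [e2, htZval]; ring
    have hβZ : β (artanh ((a - b) / (a + b - 2))) < 0 := by
      rw [hβ, htZ]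
      have hkey : (a + b) * ((a - b) / (a + b - 2)) + b - a = 2 * (a - b) / (a + b - 2) := by
        field_simp; ring
      rw [hkey]
      have : 2 * (a - b) / (a + b - 2) < 0 := div_neg_of_neg_of_pos (by linarith) hA
      linarith
    have hαt : Tendsto α (nhdsWithin (artanh ((a - b) / (a + b - 2)))
        (Set.Ioi (artanh ((a - b) / (a + b - 2))))) (nhdsWithin 0 (Set.Ioi 0)) := by
      apply tendsto_nhdsWithin_of_tendsto_nhds_of_eventually_within
      · have h := hcontα.continuousAt (x := artanh ((a - b) / (a + b - 2)))
        rw [ContinuousAt, hαZ] at h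
        exact h.mono_left nhdsWithin_le_nhds
      · exact eventually_nhdsWithin_of_forall hαpos
    have hinv : Tendsto (fun x => (α x)⁻¹) (nhdsWithin (artanh ((a - b) / (a + b - 2)))
        (Set.Ioi (artanh ((a - b) / (a + b - 2))))) atTop :=
      tendsto_inv_nhdsGT_zero.comp hαt
    have hβt : Tendsto β (nhdsWithin (artanh ((a - b) / (a + b - 2)))
        (Set.Ioi (artanh ((a - b) / (a + b - 2)))))
        (nhds (β (artanh ((a - b) / (a + b - 2))))) :=
      (hcontβ.continuousAt).continuousWithinAt.tendsto
    have := hβt.neg_mul_atTop hβZ hinv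
    refine this.congr (fun x => ?_)
    rw [hq, div_eq_mul_inv]
  · have hβt : Tendsto β atTop (nhds ((1/4) * ((a + b) * 1 + b - a))) := by
      have h := (((tanh_tendsto_atTop.const_mul (a + b)).add_const b).sub_const a).const_mul
        ((1:ℝ)/4)
      exact h.congr (fun x => (hβ x).symm)
    have hαt : Tendsto α atTop (nhds ((1/2) * ((a + b - 2) * 1 + b - a))) := by
      have h := (((tanh_tendsto_atTop.const_mul (a + b - 2)).add_const b).sub_const a).const_mul
        ((1:ℝ)/2)
      exact h.congr (fun x => (hα x).symm)
    have hne : (1/2) * ((a + b - 2) * 1 + b - a) ≠ 0 := by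
      have : (0:ℝ) < (1/2) * ((a + b - 2) * 1 + b - a) := by linarith
      exact this.ne'
    have h := hβt.div hαt hne
    have hval : (1/4) * ((a + b) * 1 + b - a) / ((1/2) * ((a + b - 2) * 1 + b - a))
        = b / (2 * (b - 1)) := by
      have h2 : (1/4) * ((a + b) * 1 + b - a) = b / 2 := by ring
      have h3 : (1/2) * ((a + b - 2) * 1 + b - a) = b - 1 := by ring
      rw [h2, h3, div_div]
    rw [hval] at h
    exact h.congr (fun x => (hq x).symm)

/-- For m0 ≥ 2, m1 > m0, the quotient q = β/α is strictly increasing on (Z_α,∞),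
tends to -∞ as x → Z_α from the right, and tends to m1/(2(m1-1)) as x → ∞. -/
theorem quotient_q_properties (m0 m1 : ℕ) (hm0 : 2 ≤ m0) (hm1 : m0 < m1)
    (α β q : ℝ → ℝ)
    (hα : ∀ x, α x = (1/2) * (((m0:ℝ) + m1 - 2) * Real.tanh x + m1 - m0))
    (hβ : ∀ x, β x = (1/4) * (((m0:ℝ) + m1) * Real.tanh x + m1 - m0))
    (hq : ∀ x, q x = β x / α x) :
    StrictMonoOn q (Set.Ioi (artanh (((m0:ℝ) - m1) / ((m0:ℝ) + m1 - 2)))) ∧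
      Tendsto q (nhdsWithin (artanh (((m0:ℝ) - m1) / ((m0:ℝ) + m1 - 2)))
        (Set.Ioi (artanh (((m0:ℝ) - m1) / ((m0:ℝ) + m1 - 2))))) atBot ∧
      Tendsto q atTop (nhds ((m1:ℝ) / (2 * ((m1:ℝ) - 1)))) := by
  have hm0' : (2:ℝ) ≤ (m0:ℝ) := by exact_mod_cast hm0
  have hm1' : (m0:ℝ) < (m1:ℝ) := by exact_mod_cast hm1
  exact quotient_aux (m0:ℝ) (m1:ℝ) hm0' hm1' α β q hα hβ hq
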